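/- For every school-choice instance and every student s, the discovery-program assignment equals the projection of the student-optimal stable matching of the DISC auxiliary instance: μ^DISC(s) = ω(μ^DISC-a(s)). -/

import Mathlib

/-!
Common formalization of school-choice instances with reserved seats
(minority reserve, joint seat allocation, discovery program).

Conventions:
* `prio c s` is the priority rank of student `s` at school `c`
  (smaller value = higher priority); injectivity encodes a strict priority order.
* `pref s o` is the preference rank of outcome `o : Option C` for student `s`
  (smaller value = more preferred); `none` denotes being unmatched, and a school
  `c` is acceptable to `s` iff `pref s (some c) < pref s none`.
-/

open Finset

structure SchoolChoice (S C : Type*) [Fintype S] [DecidableEq S] [Fintype C] [DecidableEq C] where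
  /-- the set of disadvantaged (minority) students; the rest are advantaged -/
  dis : Finset S
  /-- preference rank of each outcome (school or `none` = unmatched) for each student -/
  pref : S → Option C → ℕ
  pref_inj : ∀ s, Function.Injective (pref s)
  /-- priority rank of each student at each school (lower = higher priority) -/
  prio : C → S → ℕ
  prio_inj : ∀ c, Function.Injective (prio c)
  /-- quota of each school -/
  q : C → ℕ
  /-- reservation quota of each school -/
  qR : C → ℕ
  qR_le : ∀ c, qR c ≤ q c

namespace SchoolChoice

variable {S C : Type*} [Fintype S] [DecidableEq S] [Fintype C] [DecidableEq C]

/-- `max(T, >_c, k)`: the `min(k, |T|)` highest-priority students of `T` at school `c`. -/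
def maxSet (I : SchoolChoice S C) (c : C) (T : Finset S) (k : ℕ) : Finset S :=
  T.filter fun s => (T.filter fun t => I.prio c t < I.prio c s).card < k

/-- baseline choice function `C^BASE_c` -/
def CBASE (I : SchoolChoice S C) (c : C) (T : Finset S) : Finset S :=
  I.maxSet c T (I.q c)

/-- `S1^R` of the minority-reserve choice function -/
def mrRes (I : SchoolChoice S C) (c : C) (T : Finset S) : Finset S :=
  I.maxSet c (T ∩ I.dis) (I.qR c)

/-- minority-reserve choice function `C^MR_c` -/
def CMR (I : SchoolChoice S C) (c : C) (T : Finset S) : Finset S :=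
  I.mrRes c T ∪ I.maxSet c (T \ I.mrRes c T) (I.q c - (I.mrRes c T).card)

/-- `S1^G` of the joint-seat-allocation choice function -/
def jsaGen (I : SchoolChoice S C) (c : C) (T : Finset S) : Finset S :=
  I.maxSet c T (I.q c - I.qR c)

/-- `S1^R` of the joint-seat-allocation choice function -/
def jsaRes (I : SchoolChoice S C) (c : C) (T : Finset S) : Finset S :=
  I.maxSet c ((T ∩ I.dis) \ I.jsaGen c T) (I.qR c)

/-- joint-seat-allocation choice function `C^JSA_c` -/
def CJSA (I : SchoolChoice S C) (c : C) (T : Finset S) : Finset S :=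
  I.jsaGen c T ∪ I.jsaRes c T ∪
    I.maxSet c (T \ (I.jsaGen c T ∪ I.jsaRes c T))
      (I.q c - (I.jsaGen c T ∪ I.jsaRes c T).card)

/-- school `c` is acceptable to student `s` -/
def acceptable (I : SchoolChoice S C) (s : S) (c : C) : Prop :=
  I.pref s (some c) < I.pref s none

/-- `μ(c)`: the set of students assigned to school `c` by `μ` -/
def assigned (I : SchoolChoice S C) (μ : S → Option C) (c : C) : Finset S :=
  Finset.univ.filter fun s => μ s = some c

/-- `μ` is a matching: students are assigned only acceptable schools, quotas respected -/
def IsMatching (I : SchoolChoice S C) (μ : S → Option C) : Prop :=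
  (∀ s c, μ s = some c → I.acceptable s c) ∧ ∀ c, (I.assigned μ c).card ≤ I.q c

/-- `μ` is stable w.r.t. the choice functions `Ch`: it is a matching and no pair
`(s, c)` with `c` acceptable to `s` satisfies `c >_s μ(s)` and `s ∈ Ch c (μ(c) ∪ {s})`. -/
def IsStable (I : SchoolChoice S C) (Ch : C → Finset S → Finset S) (μ : S → Option C) : Prop :=
  I.IsMatching μ ∧
    ∀ s c, I.acceptable s c → I.pref s (some c) < I.pref s (μ s) →
      s ∉ Ch c (insert s (I.assigned μ c))

/-- `μ` is the student-optimal stable matching w.r.t. `Ch`: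
stable and weakly preferred by every student to every stable matching. -/
def IsOptStable (I : SchoolChoice S C) (Ch : C → Finset S → Finset S) (μ : S → Option C) :
    Prop :=
  I.IsStable Ch μ ∧ ∀ μ', I.IsStable Ch μ' → ∀ s, I.pref s (μ s) ≤ I.pref s (μ' s)

/-! Restricted (sub)instances, used by the three-stage discovery program: only students
in `A` participate and school `c` has quota `q' c`, with baseline (responsive) choice
functions. -/

def IsMatchingOn (I : SchoolChoice S C) (A : Finset S) (q' : C → ℕ) (μ : S → Option C) :
    Prop :=
  (∀ s, s ∉ A → μ s = none) ∧
    (∀ s c, μ s = some c → I.acceptable s c) ∧ ∀ c, (I.assigned μ c).card ≤ q' c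

def IsStableOn (I : SchoolChoice S C) (A : Finset S) (q' : C → ℕ) (μ : S → Option C) : Prop :=
  I.IsMatchingOn A q' μ ∧
    ∀ s ∈ A, ∀ c : C, I.acceptable s c → I.pref s (some c) < I.pref s (μ s) →
      s ∉ I.maxSet c (insert s (I.assigned μ c)) (q' c)

def IsOptStableOn (I : SchoolChoice S C) (A : Finset S) (q' : C → ℕ) (μ : S → Option C) :
    Prop :=
  I.IsStableOn A q' μ ∧
    ∀ μ', I.IsStableOn A q' μ' → ∀ s ∈ A, I.pref s (μ s) ≤ I.pref s (μ' s)

/-- `μ` is the discovery-program matching: the union of the three stage matchings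
`μ1` (general seats, all students), `μ2` (reserved seats, unmatched disadvantaged
students), `μ3` (vacant reserved seats, unmatched advantaged students). -/
def IsDisc (I : SchoolChoice S C) (μ : S → Option C) : Prop :=
  ∃ μ1 μ2 μ3 : S → Option C,
    I.IsOptStableOn Finset.univ (fun c => I.q c - I.qR c) μ1 ∧
    I.IsOptStableOn (I.dis.filter fun s => μ1 s = none) I.qR μ2 ∧
    I.IsOptStableOn ((Finset.univ \ I.dis).filter fun s => μ1 s = none)
      (fun c => I.qR c - (I.assigned μ2 c).card) μ3 ∧
    ∀ s, μ s = Option.elim (μ1 s) (Option.elim (μ2 s) (μ3 s) some) some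

/-- `(s, c)` is a blocking pair of `μ` for disadvantaged students -/
def BlockDis (I : SchoolChoice S C) (μ : S → Option C) (s : S) (c : C) : Prop :=
  s ∈ I.dis ∧ I.acceptable s c ∧ I.pref s (some c) < I.pref s (μ s) ∧
    ∃ s' ∈ I.assigned μ c, s' ∈ I.dis ∧ I.prio c s < I.prio c s'

/-- `(s, c)` is a blocking pair of `μ` for advantaged students -/
def BlockAdv (I : SchoolChoice S C) (μ : S → Option C) (s : S) (c : C) : Prop :=
  s ∉ I.dis ∧ I.acceptable s c ∧ I.pref s (some c) < I.pref s (μ s) ∧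
    ∃ s' ∈ I.assigned μ c, s' ∉ I.dis ∧ I.prio c s < I.prio c s'

/-- `(s, c)` is an in-group blocking pair of `μ` -/
def InGroupBlock (I : SchoolChoice S C) (μ : S → Option C) (s : S) (c : C) : Prop :=
  I.BlockDis μ s c ∨ I.BlockAdv μ s c

/-- all schools share a common priority order over the students -/
def CommonPriority (I : SchoolChoice S C) : Prop :=
  ∀ c c' : C, ∀ t u : S, I.prio c t < I.prio c u ↔ I.prio c' t < I.prio c' u

/-- the reservation quotas are a smart reserve w.r.t. the baseline matching `μBase` -/
def SmartReserve (I : SchoolChoice S C) (μBase : S → Option C) : Prop :=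
  ∀ c, (I.assigned μBase c ∩ I.dis).card ≤ I.qR c

end SchoolChoice
namespace SchoolChoice

variable {S C : Type*} [Fintype S] [DecidableEq S] [Fintype C] [DecidableEq C]

/-! Auxiliary instances: each school `c` is split into `Sum.inl c = c'` (general seats,
quota `q c - qR c`, priority `>_c`) and `Sum.inr c = c''` (reserved seats, quota `qR c`,
priority ranking all disadvantaged students above all advantaged students and each group
by `>_c`). The projection `ω` is `Sum.elim id id`. -/

/-- priority ranks of the auxiliary schools -/
def prioAux (I : SchoolChoice S C) : C ⊕ C → S → ℕ
  | Sum.inl c => I.prio c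
  | Sum.inr c => fun t =>
      if t ∈ I.dis then I.prio c t else Finset.univ.sup (I.prio c) + 1 + I.prio c t

theorem prioAux_inj (I : SchoolChoice S C) (d : C ⊕ C) :
    Function.Injective (I.prioAux d) := by
  cases d with
  | inl c => exact I.prio_inj c
  | inr c =>
    intro t u h
    simp only [prioAux] at h
    have ht := Finset.le_sup (f := I.prio c) (Finset.mem_univ t)
    have hu := Finset.le_sup (f := I.prio c) (Finset.mem_univ u)
    split_ifs at h
    · exact I.prio_inj c h
    · exact absurd h (by omega)
    · exact absurd h (by omega)
    · exact I.prio_inj c (by omega)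

/-- JSA auxiliary preferences: `c1' > c1'' > c2' > c2'' > ⋯` -/
def prefJSAAux (I : SchoolChoice S C) (s : S) : Option (C ⊕ C) → ℕ
  | none => 2 * I.pref s none
  | some (Sum.inl c) => 2 * I.pref s (some c)
  | some (Sum.inr c) => 2 * I.pref s (some c) + 1

theorem prefJSAAux_inj (I : SchoolChoice S C) (s : S) :
    Function.Injective (I.prefJSAAux s) := by
  intro o1 o2 h
  rcases o1 with _ | (c1 | c1) <;> rcases o2 with _ | (c2 | c2) <;>
    simp only [prefJSAAux] at h
  · rfl
  · exact absurd
      (I.pref_inj s (show I.pref s none = I.pref s (some c2) by omega)) (by simp)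
  · exact absurd h (by omega)
  · exact absurd
      (I.pref_inj s (show I.pref s (some c1) = I.pref s none by omega)) (by simp)
  · rw [Option.some.inj
      (I.pref_inj s (show I.pref s (some c1) = I.pref s (some c2) by omega))]
  · exact absurd h (by omega)
  · exact absurd h (by omega)
  · exact absurd h (by omega)
  · rw [Option.some.inj
      (I.pref_inj s (show I.pref s (some c1) = I.pref s (some c2) by omega))]

/-- a bound strictly larger than all preference ranks of student `s` -/
def prefB (I : SchoolChoice S C) (s : S) : ℕ := Finset.univ.sup (I.pref s) + 1

/-- DISC auxiliary preferences: `c1' > ⋯ > ck' > c1'' > ⋯ > ck''`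
(acceptable general copies first, then acceptable reserved copies, then being
unmatched, then the copies of unacceptable schools). -/
def prefDISCAux (I : SchoolChoice S C) (s : S) : Option (C ⊕ C) → ℕ
  | none => 2 * I.prefB s
  | some (Sum.inl c) =>
      if I.pref s (some c) < I.pref s none then I.pref s (some c)
      else 2 * I.prefB s + 1 + I.pref s (some c)
  | some (Sum.inr c) =>
      if I.pref s (some c) < I.pref s none then I.prefB s + I.pref s (some c)
      else 3 * I.prefB s + 1 + I.pref s (some c)

theorem prefDISCAux_inj (I : SchoolChoice S C) (s : S) :
    Function.Injective (I.prefDISCAux s) := by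
  have hb : ∀ o : Option C, I.pref s o < I.prefB s := by
    intro o
    have := Finset.le_sup (f := I.pref s) (Finset.mem_univ o)
    simp only [prefB]
    omega
  intro o1 o2 h
  have hn := hb none
  rcases o1 with _ | (c1 | c1) <;> rcases o2 with _ | (c2 | c2) <;>
    simp only [prefDISCAux] at h <;> try split_ifs at h
  all_goals try rfl
  all_goals
    first
    | exact absurd h (by first
        | (have := hb (some c1); have := hb (some c2); omega)
        | (have := hb (some c1); omega)
        | (have := hb (some c2); omega))
    | rw [Option.some.inj (I.pref_inj s
        (show I.pref s (some c1) = I.pref s (some c2) by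
          have := hb (some c1); have := hb (some c2); omega))]

/-- the JSA auxiliary instance -/
def jsaAux (I : SchoolChoice S C) : SchoolChoice S (C ⊕ C) where
  dis := I.dis
  pref := I.prefJSAAux
  pref_inj := I.prefJSAAux_inj
  prio := I.prioAux
  prio_inj := I.prioAux_inj
  q := Sum.elim (fun c => I.q c - I.qR c) I.qR
  qR := fun _ => 0
  qR_le := fun _ => Nat.zero_le _

/-- the DISC auxiliary instance -/
def discAux (I : SchoolChoice S C) : SchoolChoice S (C ⊕ C) :=
  { I.jsaAux with pref := I.prefDISCAux, pref_inj := I.prefDISCAux_inj }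

/-- `ψ⁻¹`: transform a matching of the original instance into a matching of the
JSA auxiliary instance: `μ2(c') = max(μ1(c), >_c, q_c^G)`, `μ2(c'') = μ1(c) \ μ2(c')`. -/
def psiInv (I : SchoolChoice S C) (μ : S → Option C) (s : S) : Option (C ⊕ C) :=
  match μ s with
  | none => none
  | some c =>
      if s ∈ I.maxSet c (I.assigned μ c) (I.q c - I.qR c) then some (Sum.inl c)
      else some (Sum.inr c)

end SchoolChoice
namespace SchoolChoice

variable {S C : Type*} [Fintype S] [DecidableEq S] [Fintype C] [DecidableEq C]

lemma pref_lt_prefB (I : SchoolChoice S C) (s : S) (o : Option C) :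
    I.pref s o < I.prefB s :=
  Nat.lt_succ_of_le (Finset.le_sup (Finset.mem_univ o))

lemma discAux_pref (I : SchoolChoice S C) : I.discAux.pref = I.prefDISCAux := rfl

lemma discAux_prio (I : SchoolChoice S C) : I.discAux.prio = I.prioAux := rfl

lemma discAux_q_inl (I : SchoolChoice S C) (c : C) :
    I.discAux.q (Sum.inl c) = I.q c - I.qR c := rfl

lemma discAux_q_inr (I : SchoolChoice S C) (c : C) :
    I.discAux.q (Sum.inr c) = I.qR c := rfl

lemma discAux_acc_inl (I : SchoolChoice S C) (s : S) (c : C) :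
    I.discAux.acceptable s (Sum.inl c) ↔ I.acceptable s c := by
  have hb := I.pref_lt_prefB s (some c)
  simp only [acceptable, discAux_pref, prefDISCAux]
  split_ifs with h
  · simp [acceptable, h]
    omega
  · simp [acceptable, h]
    omega

lemma discAux_acc_inr (I : SchoolChoice S C) (s : S) (c : C) :
    I.discAux.acceptable s (Sum.inr c) ↔ I.acceptable s c := by
  have hb := I.pref_lt_prefB s (some c)
  simp only [acceptable, discAux_pref, prefDISCAux]
  split_ifs with h
  · simp [acceptable, h]
    omega
  · simp [acceptable, h]
    omega

lemma discAux_pref_none (I : SchoolChoice S C) (s : S) :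
    I.discAux.pref s none = 2 * I.prefB s := rfl

lemma discAux_pref_inl (I : SchoolChoice S C) (s : S) (c : C) (h : I.acceptable s c) :
    I.discAux.pref s (some (Sum.inl c)) = I.pref s (some c) := if_pos h

lemma discAux_pref_inr (I : SchoolChoice S C) (s : S) (c : C) (h : I.acceptable s c) :
    I.discAux.pref s (some (Sum.inr c)) = I.prefB s + I.pref s (some c) := if_pos h

lemma mem_maxSet (I : SchoolChoice S C) {s : S} {c : C} {T : Finset S} {k : ℕ} :
    s ∈ I.maxSet c T k ↔
      s ∈ T ∧ (T.filter fun t => I.prio c t < I.prio c s).card < k :=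
  Finset.mem_filter

lemma mem_assigned (I : SchoolChoice S C) {μ : S → Option C} {s : S} {c : C} :
    s ∈ I.assigned μ c ↔ μ s = some c := by
  simp [assigned]

lemma prioAux_inr_lt_dis (I : SchoolChoice S C) {s : S} (c : C)
    (hs : s ∈ I.dis) (t : S) :
    I.prioAux (Sum.inr c) t < I.prioAux (Sum.inr c) s ↔
      t ∈ I.dis ∧ I.prio c t < I.prio c s := by
  have hms : I.prio c s ≤ Finset.univ.sup (I.prio c) := Finset.le_sup (Finset.mem_univ s)
  simp only [prioAux, if_pos hs]
  by_cases ht : t ∈ I.dis <;> simp [ht] <;> omega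

lemma prioAux_inr_lt_adv (I : SchoolChoice S C) {s : S} (c : C)
    (hs : s ∉ I.dis) (t : S) :
    I.prioAux (Sum.inr c) t < I.prioAux (Sum.inr c) s ↔
      t ∈ I.dis ∨ (t ∉ I.dis ∧ I.prio c t < I.prio c s) := by
  have hmt : I.prio c t ≤ Finset.univ.sup (I.prio c) := Finset.le_sup (Finset.mem_univ t)
  simp only [prioAux, if_neg hs]
  by_cases ht : t ∈ I.dis <;> simp [ht] <;> omega

lemma discAux_maxSet_inl (I : SchoolChoice S C) (c : C) (T : Finset S) (k : ℕ) :
    I.discAux.maxSet (Sum.inl c) T k = I.maxSet c T k := rfl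

lemma mem_discAux_maxSet_inr_dis (I : SchoolChoice S C) {s : S} {c : C}
    {T : Finset S} {k : ℕ} (hs : s ∈ I.dis) :
    s ∈ I.discAux.maxSet (Sum.inr c) T k ↔
      s ∈ I.maxSet c (T.filter (· ∈ I.dis)) k := by
  have hcnt : (T.filter fun t => I.discAux.prio (Sum.inr c) t < I.discAux.prio (Sum.inr c) s)
      = (T.filter (· ∈ I.dis)).filter fun t => I.prio c t < I.prio c s := by
    rw [Finset.filter_filter]
    exact Finset.filter_congr fun t _ => by
      rw [discAux_prio, I.prioAux_inr_lt_dis c hs t]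
  constructor
  · intro h
    rw [maxSet, Finset.mem_filter] at h
    rw [mem_maxSet]
    exact ⟨Finset.mem_filter.2 ⟨h.1, hs⟩, by rw [← hcnt]; exact h.2⟩
  · intro h
    rw [mem_maxSet] at h
    rw [maxSet, Finset.mem_filter]
    exact ⟨(Finset.mem_filter.1 h.1).1, by rw [hcnt]; exact h.2⟩

lemma mem_discAux_maxSet_inr_adv (I : SchoolChoice S C) {s : S} {c : C}
    {T : Finset S} {k : ℕ} (hs : s ∉ I.dis) (hsT : s ∈ T) :
    s ∈ I.discAux.maxSet (Sum.inr c) T k ↔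
      s ∈ I.maxSet c (T.filter (· ∉ I.dis)) (k - (T.filter (· ∈ I.dis)).card) := by
  have hcnt : (T.filter fun t => I.discAux.prio (Sum.inr c) t < I.discAux.prio (Sum.inr c) s).card
      = (T.filter (· ∈ I.dis)).card
        + ((T.filter (· ∉ I.dis)).filter fun t => I.prio c t < I.prio c s).card := by
    have h1 : (T.filter fun t => I.discAux.prio (Sum.inr c) t < I.discAux.prio (Sum.inr c) s)
        = (T.filter (· ∈ I.dis)) ∪ (T.filter fun t => t ∉ I.dis ∧ I.prio c t < I.prio c s) := by
      rw [← Finset.filter_or]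
      refine Finset.filter_congr fun t _ => ?_
      rw [discAux_prio, I.prioAux_inr_lt_adv c hs t]
    have hdisj : Disjoint (T.filter (· ∈ I.dis))
        (T.filter fun t => t ∉ I.dis ∧ I.prio c t < I.prio c s) := by
      simp only [Finset.disjoint_left, Finset.mem_filter]
      rintro a ⟨-, ha⟩ ⟨-, ha', -⟩
      exact ha' ha
    rw [h1, Finset.card_union_of_disjoint hdisj, Finset.filter_filter]
  constructor
  · intro h
    rw [maxSet, Finset.mem_filter] at h
    rw [mem_maxSet]
    refine ⟨Finset.mem_filter.2 ⟨hsT, hs⟩, ?_⟩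
    rw [hcnt] at h
    omega
  · intro h
    rw [mem_maxSet] at h
    rw [maxSet, Finset.mem_filter]
    refine ⟨hsT, ?_⟩
    rw [hcnt]
    have hk := h.2
    omega

end SchoolChoice
namespace SchoolChoice

variable {S C : Type*} [Fintype S] [DecidableEq S] [Fintype C] [DecidableEq C]

lemma discAux_CBASE_inl (I : SchoolChoice S C) (c : C) (T : Finset S) :
    I.discAux.CBASE (Sum.inl c) T = I.maxSet c T (I.q c - I.qR c) := rfl

lemma discAux_CBASE_inr (I : SchoolChoice S C) (c : C) (T : Finset S) :
    I.discAux.CBASE (Sum.inr c) T = I.discAux.maxSet (Sum.inr c) T (I.qR c) := rfl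

end SchoolChoice
/-- the discovery-program assignment equals the projection of the
student-optimal stable matching of the DISC auxiliary instance. -/
theorem DISC_aux_equivalence {S C : Type*} [Fintype S] [DecidableEq S] [Fintype C] [DecidableEq C]
    (I : SchoolChoice S C) (μD : S → Option C) (μA : S → Option (C ⊕ C))
    (hD : I.IsDisc μD)
    (hA : I.discAux.IsOptStable I.discAux.CBASE μA) :
    ∀ s : S, μD s = (μA s).map (Sum.elim id id) := by
  classical
  open SchoolChoice in
  obtain ⟨μ1, μ2, μ3, h1, h2, h3, hμD⟩ := hD
  obtain ⟨⟨⟨h1supp, h1acc, h1q⟩, h1blk⟩, h1opt⟩ := h1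
  obtain ⟨⟨⟨h2supp, h2acc, h2q⟩, h2blk⟩, h2opt⟩ := h2
  obtain ⟨⟨⟨h3supp, h3acc, h3q⟩, h3blk⟩, h3opt⟩ := h3
  obtain ⟨⟨⟨hAacc, hAq⟩, hAblk⟩, hAopt⟩ := hA
  -- domain facts for the stage matchings
  have h2dom : ∀ s, μ2 s ≠ none → s ∈ I.dis ∧ μ1 s = none := by
    intro s h
    by_contra hcon
    exact h (h2supp s fun hmem => hcon (Finset.mem_filter.1 hmem))
  have h3dom : ∀ s, μ3 s ≠ none → s ∉ I.dis ∧ μ1 s = none := by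
    intro s h
    by_contra hcon
    refine h (h3supp s fun hmem => ?_)
    obtain ⟨hs1, hs2⟩ := Finset.mem_filter.1 hmem
    exact hcon ⟨(Finset.mem_sdiff.1 hs1).2, hs2⟩
  -- the lift of the discovery matching to the auxiliary instance
  set ν : S → Option (C ⊕ C) := fun t =>
    Option.elim (μ1 t) (Option.map Sum.inr (Option.elim (μ2 t) (μ3 t) some))
      (fun c => some (Sum.inl c)) with hνd
  have hν1 : ∀ t c, μ1 t = some c → ν t = some (Sum.inl c) := by
    intro t c h; simp [hνd, h]
  have hν2 : ∀ t c, μ1 t = none → μ2 t = some c → ν t = some (Sum.inr c) := by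
    intro t c h h'; simp [hνd, h, h']
  have hν3 : ∀ t, μ1 t = none → μ2 t = none → ν t = Option.map Sum.inr (μ3 t) := by
    intro t h h'; simp [hνd, h, h']
  have hνinl : ∀ t c, ν t = some (Sum.inl c) ↔ μ1 t = some c := by
    intro t c
    rcases h1t : μ1 t with _ | c1
    · rcases h2t : μ2 t with _ | c2
      · rcases h3t : μ3 t with _ | c3 <;> simp [hνd, h1t, h2t, h3t]
      · simp [hνd, h1t, h2t]
    · simp [hνd, h1t]
  have hνinr : ∀ t c, ν t = some (Sum.inr c) ↔ (μ2 t = some c ∨ μ3 t = some c) := by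
    intro t c
    rcases h1t : μ1 t with _ | c1
    · rcases h2t : μ2 t with _ | c2
      · rcases h3t : μ3 t with _ | c3 <;> simp [hνd, h1t, h2t, h3t]
      · have h3t : μ3 t = none := by
          rcases h3t : μ3 t with _ | c3
          · rfl
          · exact absurd (h2dom t (by simp [h2t])).1
              (fun hd => (h3dom t (by simp [h3t])).1 hd)
        simp [hνd, h1t, h2t, h3t]
    · simp only [hνd, h1t, Option.elim]
      constructor
      · intro h; cases h
      · rintro (h | h)
        · have := (h2dom t (by simp [h])).2; rw [h1t] at this; cases this
        · have := (h3dom t (by simp [h])).2; rw [h1t] at this; cases this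
  have hassl : ∀ c, I.discAux.assigned ν (Sum.inl c) = I.assigned μ1 c := by
    intro c; ext t
    rw [mem_assigned, mem_assigned]
    exact hνinl t c
  have hassr : ∀ c, I.discAux.assigned ν (Sum.inr c)
      = I.assigned μ2 c ∪ I.assigned μ3 c := by
    intro c; ext t
    rw [mem_assigned, Finset.mem_union, mem_assigned, mem_assigned]
    exact hνinr t c
  have hdisj23 : ∀ c, Disjoint (I.assigned μ2 c) (I.assigned μ3 c) := by
    intro c
    rw [Finset.disjoint_left]
    intro a ha hb
    rw [mem_assigned] at ha hb
    exact (h3dom a (by simp [hb])).1 (h2dom a (by simp [ha])).1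
  -- ν is stable in the auxiliary instance
  have hνstable : I.discAux.IsStable I.discAux.CBASE ν := by
    refine ⟨⟨?_, ?_⟩, ?_⟩
    · intro s d hd
      rcases d with c | c
      · rw [discAux_acc_inl]
        exact h1acc s c ((hνinl s c).1 hd)
      · rw [discAux_acc_inr]
        rcases (hνinr s c).1 hd with h | h
        · exact h2acc s c h
        · exact h3acc s c h
    · intro d
      rcases d with c | c
      · rw [hassl c, discAux_q_inl]
        exact h1q c
      · rw [hassr c, discAux_q_inr, Finset.card_union_of_disjoint (hdisj23 c)]
        have := h2q c
        have h3q' : (I.assigned μ3 c).card ≤ I.qR c - (I.assigned μ2 c).card := h3q c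
        omega
    · intro s d hacc hlt
      rcases d with c | c
      · -- blocking via a general copy
        rw [discAux_acc_inl] at hacc
        intro hmem
        rw [hassl c, discAux_CBASE_inl] at hmem
        refine h1blk s (Finset.mem_univ s) c hacc ?_ hmem
        rcases h1s : μ1 s with _ | c0
        · exact hacc
        · rw [hν1 s c0 h1s, I.discAux_pref_inl _ _ (h1acc s c0 h1s),
            I.discAux_pref_inl _ _ hacc] at hlt
          exact hlt
      · -- blocking via a reserved copy
        rw [discAux_acc_inr] at hacc
        intro hmem
        rw [discAux_CBASE_inr] at hmem
        rw [I.discAux_pref_inr _ _ hacc] at hlt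
        -- first: μ1 s = none
        rcases h1s : μ1 s with _ | c1
        swap
        · rw [hν1 s c1 h1s, I.discAux_pref_inl _ _ (h1acc s c1 h1s)] at hlt
          have := I.pref_lt_prefB s (some c1)
          omega
        by_cases hs : s ∈ I.dis
        · -- disadvantaged student: stage-2 blocking pair
          rw [I.mem_discAux_maxSet_inr_dis hs] at hmem
          have hTd : (insert s (I.discAux.assigned ν (Sum.inr c))).filter (· ∈ I.dis)
              = insert s (I.assigned μ2 c) := by
            rw [Finset.filter_insert, if_pos hs, hassr c]
            congr 1
            ext t
            simp only [Finset.mem_filter, Finset.mem_union, mem_assigned]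
            constructor
            · rintro ⟨h | h, hd⟩
              · exact h
              · exact absurd hd (h3dom t (by simp [h])).1
            · intro h
              exact ⟨Or.inl h, (h2dom t (by simp [h])).1⟩
          rw [hTd] at hmem
          refine h2blk s (Finset.mem_filter.2 ⟨hs, h1s⟩) c hacc ?_ hmem
          have h3s : μ3 s = none := by
            rcases h3s : μ3 s with _ | c3
            · rfl
            · exact absurd hs (h3dom s (by simp [h3s])).1
          rcases h2s : μ2 s with _ | c2
          · exact hacc
          · rw [hν2 s c2 h1s h2s, I.discAux_pref_inr _ _ (h2acc s c2 h2s)] at hlt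
            omega
        · -- advantaged student: stage-3 blocking pair
          rw [I.mem_discAux_maxSet_inr_adv hs (Finset.mem_insert_self _ _)] at hmem
          have hTd : (insert s (I.discAux.assigned ν (Sum.inr c))).filter (· ∈ I.dis)
              = I.assigned μ2 c := by
            rw [Finset.filter_insert, if_neg hs, hassr c]
            ext t
            simp only [Finset.mem_filter, Finset.mem_union, mem_assigned]
            constructor
            · rintro ⟨h | h, hd⟩
              · exact h
              · exact absurd hd (h3dom t (by simp [h])).1
            · intro h
              exact ⟨Or.inl h, (h2dom t (by simp [h])).1⟩
          have hTa : (insert s (I.discAux.assigned ν (Sum.inr c))).filter (· ∉ I.dis)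
              = insert s (I.assigned μ3 c) := by
            rw [Finset.filter_insert, if_pos hs, hassr c]
            congr 1
            ext t
            simp only [Finset.mem_filter, Finset.mem_union, mem_assigned]
            constructor
            · rintro ⟨h | h, hd⟩
              · exact absurd (h2dom t (by simp [h])).1 hd
              · exact h
            · intro h
              exact ⟨Or.inr h, (h3dom t (by simp [h])).1⟩
          rw [hTd, hTa] at hmem
          refine h3blk s
            (Finset.mem_filter.2 ⟨Finset.mem_sdiff.2 ⟨Finset.mem_univ s, hs⟩, h1s⟩)
            c hacc ?_ hmem
          have h2s : μ2 s = none := by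
            rcases h2s : μ2 s with _ | c2
            · rfl
            · exact absurd (h2dom s (by simp [h2s])).1 hs
          rcases h3s : μ3 s with _ | c3
          · exact hacc
          · have hνs : ν s = some (Sum.inr c3) := by
              rw [hν3 s h1s h2s, h3s]; rfl
            rw [hνs, I.discAux_pref_inr _ _ (h3acc s c3 h3s)] at hlt
            omega
  -- dominance of μA over ν
  have hdom : ∀ s, I.discAux.pref s (μA s) ≤ I.discAux.pref s (ν s) :=
    fun s => hAopt ν hνstable s
  -- stage-1 projection of μA
  set α1 : S → Option C :=
    fun t => (μA t).bind (Sum.elim (fun c => some c) (fun _ => none)) with hα1d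
  have hα1some : ∀ t c, α1 t = some c ↔ μA t = some (Sum.inl c) := by
    intro t c
    rcases hAt : μA t with _ | (c' | c') <;> simp [hα1d, hAt]
  have hα1assigned : ∀ c, I.assigned α1 c = I.discAux.assigned μA (Sum.inl c) := by
    intro c; ext t
    rw [mem_assigned, mem_assigned]
    exact hα1some t c
  have hα1stable : I.IsStableOn Finset.univ (fun c => I.q c - I.qR c) α1 := by
    refine ⟨⟨fun s hs => absurd (Finset.mem_univ s) hs, ?_, ?_⟩, ?_⟩
    · intro s c h
      rw [← discAux_acc_inl]
      exact hAacc s (Sum.inl c) ((hα1some s c).1 h)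
    · intro c
      rw [hα1assigned c]
      exact hAq (Sum.inl c)
    · intro s _ c hacc hlt hmem
      have hltJ : I.discAux.pref s (some (Sum.inl c)) < I.discAux.pref s (μA s) := by
        rw [I.discAux_pref_inl _ _ hacc]
        rcases hAs : μA s with _ | (c0 | c0)
        · rw [discAux_pref_none]
          have := I.pref_lt_prefB s (some c)
          omega
        · have hacc0 := (I.discAux_acc_inl s c0).1 (hAacc s _ hAs)
          rw [I.discAux_pref_inl _ _ hacc0]
          have : α1 s = some c0 := (hα1some s c0).2 hAs
          rw [this] at hlt
          exact hlt
        · have hacc0 := (I.discAux_acc_inr s c0).1 (hAacc s _ hAs)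
          rw [I.discAux_pref_inr _ _ hacc0]
          have := I.pref_lt_prefB s (some c)
          omega
      refine hAblk s (Sum.inl c) ((I.discAux_acc_inl s c).2 hacc) hltJ ?_
      rw [discAux_CBASE_inl, ← hα1assigned c]
      exact hmem
  have hdom1 : ∀ s, I.pref s (μ1 s) ≤ I.pref s (α1 s) :=
    fun s => h1opt α1 hα1stable s (Finset.mem_univ s)
  -- μ1 coincides with the stage-1 projection of μA
  have hμ1α : ∀ s, μ1 s = α1 s := by
    intro s
    have hds := hdom s
    have hd1 := hdom1 s
    rcases hAs : μA s with _ | (c | c)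
    · have hα : α1 s = none := by simp [hα1d, hAs]
      rw [hα]
      rcases h1s : μ1 s with _ | c1
      · rfl
      · exfalso
        rw [hAs, hν1 s c1 h1s, discAux_pref_none,
          I.discAux_pref_inl _ _ (h1acc s c1 h1s)] at hds
        have := I.pref_lt_prefB s (some c1)
        omega
    · have hα : α1 s = some c := (hα1some s c).2 hAs
      have haccc : I.acceptable s c := (I.discAux_acc_inl s c).1 (hAacc s _ hAs)
      rw [hα]
      rcases h1s : μ1 s with _ | c1
      · exfalso
        rw [h1s, hα] at hd1
        exact absurd hd1 (not_le.2 haccc)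
      · rw [hAs, hν1 s c1 h1s, I.discAux_pref_inl _ _ haccc,
          I.discAux_pref_inl _ _ (h1acc s c1 h1s)] at hds
        rw [h1s, hα] at hd1
        exact I.pref_inj s (le_antisymm hd1 hds)
    · have hα : α1 s = none := by simp [hα1d, hAs]
      rw [hα]
      rcases h1s : μ1 s with _ | c1
      · rfl
      · exfalso
        have haccc := (I.discAux_acc_inr s c).1 (hAacc s _ hAs)
        rw [hAs, hν1 s c1 h1s, I.discAux_pref_inr _ _ haccc,
          I.discAux_pref_inl _ _ (h1acc s c1 h1s)] at hds
        have := I.pref_lt_prefB s (some c1)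
        omega
  -- stage-2 projection of μA
  set α2 : S → Option C := fun t =>
    if t ∈ I.dis then (μA t).bind (Sum.elim (fun _ => none) some) else none with hα2d
  have hα2some : ∀ t c, α2 t = some c ↔ t ∈ I.dis ∧ μA t = some (Sum.inr c) := by
    intro t c
    by_cases ht : t ∈ I.dis <;> rcases hAt : μA t with _ | (c' | c') <;>
      simp [hα2d, ht, hAt]
  have hα2assigned : ∀ c,
      I.assigned α2 c = (I.discAux.assigned μA (Sum.inr c)).filter (· ∈ I.dis) := by
    intro c; ext t
    rw [mem_assigned, Finset.mem_filter, mem_assigned, hα2some]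
    tauto
  have hα2supp : ∀ s, s ∉ (I.dis.filter fun s => μ1 s = none) → α2 s = none := by
    intro s hs
    by_cases hd : s ∈ I.dis
    · rcases h1s : μ1 s with _ | c1
      · exact absurd (Finset.mem_filter.2 ⟨hd, h1s⟩) hs
      · have hAs : μA s = some (Sum.inl c1) :=
          (hα1some s c1).1 (by rw [← hμ1α s]; exact h1s)
        simp [hα2d, hAs]
    · simp [hα2d, hd]
  have hα2stable : I.IsStableOn (I.dis.filter fun s => μ1 s = none) I.qR α2 := by
    refine ⟨⟨hα2supp, ?_, ?_⟩, ?_⟩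
    · intro s c h
      exact (I.discAux_acc_inr s c).1 (hAacc s _ ((hα2some s c).1 h).2)
    · intro c
      rw [hα2assigned c]
      exact le_trans (Finset.card_filter_le _ _) (hAq (Sum.inr c))
    · intro s hsA c hacc hlt hmem
      obtain ⟨hsdis, h1s⟩ := Finset.mem_filter.1 hsA
      have hα1n : α1 s = none := by rw [← hμ1α s]; exact h1s
      have hltJ : I.discAux.pref s (some (Sum.inr c)) < I.discAux.pref s (μA s) := by
        rw [I.discAux_pref_inr _ _ hacc]
        rcases hAs : μA s with _ | (c0 | c0)
        · rw [discAux_pref_none]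
          have := I.pref_lt_prefB s (some c)
          omega
        · rw [(hα1some s c0).2 hAs] at hα1n; cases hα1n
        · have hacc0 := (I.discAux_acc_inr s c0).1 (hAacc s _ hAs)
          rw [I.discAux_pref_inr _ _ hacc0]
          rw [(hα2some s c0).2 ⟨hsdis, hAs⟩] at hlt
          omega
      refine hAblk s (Sum.inr c) ((I.discAux_acc_inr s c).2 hacc) hltJ ?_
      rw [discAux_CBASE_inr, I.mem_discAux_maxSet_inr_dis hsdis,
        Finset.filter_insert, if_pos hsdis, ← hα2assigned c]
      exact hmem
  -- μ2 coincides with the stage-2 projection of μA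
  have hμ2α : ∀ s, μ2 s = α2 s := by
    intro s
    by_cases hsA : s ∈ I.dis.filter fun s => μ1 s = none
    · obtain ⟨hsdis, h1s⟩ := Finset.mem_filter.1 hsA
      have hα1n : α1 s = none := by rw [← hμ1α s]; exact h1s
      have h3s : μ3 s = none := by
        rcases h3s : μ3 s with _ | c3
        · rfl
        · exact absurd hsdis (h3dom s (by simp [h3s])).1
      have hds := hdom s
      have hd2 := h2opt α2 hα2stable s hsA
      rcases h2s : μ2 s with _ | c2
      · have hνs : ν s = none := by rw [hν3 s h1s h2s, h3s]; rfl
        rcases hAs : μA s with _ | (c0 | c0)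
        · simp [hα2d, hAs]
        · rw [(hα1some s c0).2 hAs] at hα1n; cases hα1n
        · exfalso
          have hacc0 := (I.discAux_acc_inr s c0).1 (hAacc s _ hAs)
          rw [h2s, (hα2some s c0).2 ⟨hsdis, hAs⟩] at hd2
          exact absurd hd2 (not_le.2 hacc0)
      · have hνs : ν s = some (Sum.inr c2) := hν2 s c2 h1s h2s
        have hacc2 := h2acc s c2 h2s
        rcases hAs : μA s with _ | (c0 | c0)
        · exfalso
          rw [hAs, hνs, discAux_pref_none, I.discAux_pref_inr _ _ hacc2] at hds
          have := I.pref_lt_prefB s (some c2)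
          omega
        · rw [(hα1some s c0).2 hAs] at hα1n; cases hα1n
        · have hacc0 := (I.discAux_acc_inr s c0).1 (hAacc s _ hAs)
          have hα2s : α2 s = some c0 := (hα2some s c0).2 ⟨hsdis, hAs⟩
          rw [hAs, hνs, I.discAux_pref_inr _ _ hacc0,
            I.discAux_pref_inr _ _ hacc2] at hds
          rw [h2s, hα2s] at hd2
          rw [hα2s]
          exact I.pref_inj s (le_antisymm hd2 (by omega))
    · rw [h2supp s hsA, hα2supp s hsA]
  have hass2 : ∀ c,
      I.assigned μ2 c = (I.discAux.assigned μA (Sum.inr c)).filter (· ∈ I.dis) := by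
    intro c
    rw [← hα2assigned c]
    ext t
    rw [mem_assigned, mem_assigned, hμ2α t]
  -- stage-3 projection of μA
  set α3 : S → Option C := fun t =>
    if t ∈ I.dis then none else (μA t).bind (Sum.elim (fun _ => none) some) with hα3d
  have hα3some : ∀ t c, α3 t = some c ↔ t ∉ I.dis ∧ μA t = some (Sum.inr c) := by
    intro t c
    by_cases ht : t ∈ I.dis <;> rcases hAt : μA t with _ | (c' | c') <;>
      simp [hα3d, ht, hAt]
  have hα3assigned : ∀ c,
      I.assigned α3 c = (I.discAux.assigned μA (Sum.inr c)).filter (· ∉ I.dis) := by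
    intro c; ext t
    rw [mem_assigned, Finset.mem_filter, mem_assigned, hα3some]
    tauto
  have hα3supp : ∀ s, s ∉ ((Finset.univ \ I.dis).filter fun s => μ1 s = none) →
      α3 s = none := by
    intro s hs
    by_cases hd : s ∈ I.dis
    · simp [hα3d, hd]
    · rcases h1s : μ1 s with _ | c1
      · exact absurd (Finset.mem_filter.2
          ⟨Finset.mem_sdiff.2 ⟨Finset.mem_univ s, hd⟩, h1s⟩) hs
      · have hAs : μA s = some (Sum.inl c1) :=
          (hα1some s c1).1 (by rw [← hμ1α s]; exact h1s)
        simp [hα3d, hAs]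
  have hα3stable : I.IsStableOn ((Finset.univ \ I.dis).filter fun s => μ1 s = none)
      (fun c => I.qR c - (I.assigned μ2 c).card) α3 := by
    refine ⟨⟨hα3supp, ?_, ?_⟩, ?_⟩
    · intro s c h
      exact (I.discAux_acc_inr s c).1 (hAacc s _ ((hα3some s c).1 h).2)
    · intro c
      have hsplit := Finset.card_filter_add_card_filter_not
        (s := I.discAux.assigned μA (Sum.inr c)) (p := (· ∈ I.dis))
      have hq := hAq (Sum.inr c)
      rw [discAux_q_inr] at hq
      have h2card : (I.assigned μ2 c).card
          = ((I.discAux.assigned μA (Sum.inr c)).filter (· ∈ I.dis)).card := by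
        rw [hass2 c]
      show (I.assigned α3 c).card ≤ I.qR c - (I.assigned μ2 c).card
      rw [hα3assigned c, h2card]
      omega
    · intro s hsA c hacc hlt hmem
      obtain ⟨hs1, h1s⟩ := Finset.mem_filter.1 hsA
      have hsdis : s ∉ I.dis := (Finset.mem_sdiff.1 hs1).2
      have hα1n : α1 s = none := by rw [← hμ1α s]; exact h1s
      have hltJ : I.discAux.pref s (some (Sum.inr c)) < I.discAux.pref s (μA s) := by
        rw [I.discAux_pref_inr _ _ hacc]
        rcases hAs : μA s with _ | (c0 | c0)
        · rw [discAux_pref_none]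
          have := I.pref_lt_prefB s (some c)
          omega
        · rw [(hα1some s c0).2 hAs] at hα1n; cases hα1n
        · have hacc0 := (I.discAux_acc_inr s c0).1 (hAacc s _ hAs)
          rw [I.discAux_pref_inr _ _ hacc0]
          rw [(hα3some s c0).2 ⟨hsdis, hAs⟩] at hlt
          omega
      refine hAblk s (Sum.inr c) ((I.discAux_acc_inr s c).2 hacc) hltJ ?_
      rw [discAux_CBASE_inr,
        I.mem_discAux_maxSet_inr_adv hsdis (Finset.mem_insert_self _ _),
        Finset.filter_insert, if_pos hsdis, Finset.filter_insert, if_neg hsdis,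
        ← hα3assigned c, ← hass2 c]
      exact hmem
  -- μ3 coincides with the stage-3 projection of μA
  have hμ3α : ∀ s, μ3 s = α3 s := by
    intro s
    by_cases hsA : s ∈ (Finset.univ \ I.dis).filter fun s => μ1 s = none
    · obtain ⟨hs1, h1s⟩ := Finset.mem_filter.1 hsA
      have hsdis : s ∉ I.dis := (Finset.mem_sdiff.1 hs1).2
      have hα1n : α1 s = none := by rw [← hμ1α s]; exact h1s
      have h2s : μ2 s = none := by
        rcases h2s : μ2 s with _ | c2
        · rfl
        · exact absurd (h2dom s (by simp [h2s])).1 hsdis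
      have hds := hdom s
      have hd3 := h3opt α3 hα3stable s hsA
      rcases h3s : μ3 s with _ | c3
      · have hνs : ν s = none := by rw [hν3 s h1s h2s, h3s]; rfl
        rcases hAs : μA s with _ | (c0 | c0)
        · simp [hα3d, hAs]
        · rw [(hα1some s c0).2 hAs] at hα1n; cases hα1n
        · exfalso
          have hacc0 := (I.discAux_acc_inr s c0).1 (hAacc s _ hAs)
          rw [h3s, (hα3some s c0).2 ⟨hsdis, hAs⟩] at hd3
          exact absurd hd3 (not_le.2 hacc0)
      · have hνs : ν s = some (Sum.inr c3) := by rw [hν3 s h1s h2s, h3s]; rfl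
        have hacc3 := h3acc s c3 h3s
        rcases hAs : μA s with _ | (c0 | c0)
        · exfalso
          rw [hAs, hνs, discAux_pref_none, I.discAux_pref_inr _ _ hacc3] at hds
          have := I.pref_lt_prefB s (some c3)
          omega
        · rw [(hα1some s c0).2 hAs] at hα1n; cases hα1n
        · have hacc0 := (I.discAux_acc_inr s c0).1 (hAacc s _ hAs)
          have hα3s : α3 s = some c0 := (hα3some s c0).2 ⟨hsdis, hAs⟩
          rw [hAs, hνs, I.discAux_pref_inr _ _ hacc0,
            I.discAux_pref_inr _ _ hacc3] at hds
          rw [h3s, hα3s] at hd3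
          rw [hα3s]
          exact I.pref_inj s (le_antisymm hd3 (by omega))
    · rw [h3supp s hsA, hα3supp s hsA]
  -- conclusion
  intro s
  rw [hμD s]
  rcases hAs : μA s with _ | (c | c)
  · have h1s : μ1 s = none := by rw [hμ1α s]; simp [hα1d, hAs]
    have h2s : μ2 s = none := by rw [hμ2α s]; simp [hα2d, hAs]
    have h3s : μ3 s = none := by rw [hμ3α s]; simp [hα3d, hAs]
    simp [h1s, h2s, h3s]
  · have h1s : μ1 s = some c := by rw [hμ1α s]; exact (hα1some s c).2 hAs
    simp [h1s]
  · have h1s : μ1 s = none := by rw [hμ1α s]; simp [hα1d, hAs]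
    by_cases hsdis : s ∈ I.dis
    · have h2s : μ2 s = some c := by rw [hμ2α s]; exact (hα2some s c).2 ⟨hsdis, hAs⟩
      simp [h1s, h2s]
    · have h2s : μ2 s = none := by rw [hμ2α s]; simp [hα2d, hsdis]
      have h3s : μ3 s = some c := by rw [hμ3α s]; exact (hα3some s c).2 ⟨hsdis, hAs⟩
      simp [h1s, h2s, h3s]
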